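/- Vanishing of the normalized partial sums of powers of a covariance sequence. Let q ≥ 2 be an integer, let r be an integer with 1 ≤ r ≤ q − 1, and let ρ : ℤ → ℝ be such that Σ_{k∈ℤ} |ρ(k)|^q < ∞. Then n^{−(q−r)/q} · Σ_{|i|<n} |ρ(i)|^r → 0 as n → ∞. -/

import Mathlib

open Filter Finset Real

private lemma aux_pointwise (q r : ℕ) (hrq : r ≤ q) (a η : ℝ) (ha : 0 ≤ a) (hη : 0 < η) :
    a ^ r ≤ η ^ r + a ^ q / η ^ (q - r) := by
  rcases le_or_gt a η with h | h
  · have h2 : (0:ℝ) ≤ a ^ q / η ^ (q - r) :=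
      div_nonneg (pow_nonneg ha _) (pow_nonneg hη.le _)
    have h3 : a ^ r ≤ η ^ r := pow_le_pow_left₀ ha h r
    linarith
  · have hηa : η ^ (q - r) ≤ a ^ (q - r) := pow_le_pow_left₀ hη.le h.le _
    have hmul : a ^ r * η ^ (q - r) ≤ a ^ q := by
      calc a ^ r * η ^ (q - r) ≤ a ^ r * a ^ (q - r) :=
            mul_le_mul_of_nonneg_left hηa (pow_nonneg ha r)
        _ = a ^ q := by rw [← pow_add]; congr 1; omega
    have hle : a ^ r ≤ a ^ q / η ^ (q - r) :=
      (le_div_iff₀ (pow_pos hη _)).mpr hmul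
    have : (0:ℝ) ≤ η ^ r := pow_nonneg hη.le r
    linarith

/-- **Vanishing of the normalized partial sums of powers of a covariance
sequence.** Let `q ≥ 2`, `1 ≤ r ≤ q − 1`, and `ρ : ℤ → ℝ` with
`Σ_{k∈ℤ} |ρ(k)|^q < ∞`. Then `n^{−(q−r)/q} Σ_{|i|<n} |ρ(i)|^r → 0`. -/
theorem normalized_partial_sums_vanish
    (q r : ℕ) (hq : 2 ≤ q) (hr1 : 1 ≤ r) (hr2 : r ≤ q - 1)
    (ρ : ℤ → ℝ) (hsum : Summable (fun k : ℤ => |ρ k| ^ q)) :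
    Tendsto (fun n : ℕ =>
        (n : ℝ) ^ (-(((q : ℝ) - r) / q)) *
          ∑ i ∈ Finset.Ioo (-(n : ℤ)) (n : ℤ), |ρ i| ^ r)
      atTop (nhds 0) := by
  have hrq : r < q := by omega
  have hq0 : (0:ℝ) < q := by positivity
  set α : ℝ := ((q : ℝ) - r) / q with hα_def
  have hrR : (r:ℝ) < q := by exact_mod_cast hrq
  have hα : 0 < α := div_pos (by linarith) hq0
  rw [NormedAddCommGroup.tendsto_nhds_zero]
  intro ε hε
  -- choose t
  set t : ℝ := min 1 (ε/8) with ht_def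
  have ht0 : 0 < t := lt_min one_pos (by linarith)
  have ht1 : t ≤ 1 := min_le_left _ _
  have htε : t ≤ ε/8 := min_le_right _ _
  -- choose tail bound
  set ε₀ : ℝ := (ε/4) * t ^ (q - r) with hε₀_def
  have hε₀ : 0 < ε₀ := by positivity
  obtain ⟨s, hs⟩ := summable_iff_vanishing.mp hsum (Metric.ball 0 ε₀)
    (Metric.ball_mem_nhds _ hε₀)
  set K : ℕ := s.sup (fun i => i.natAbs) with hK_def
  set B : Finset ℤ := Finset.Icc (-(K:ℤ)) (K:ℤ) with hB_def
  have hsB : s ⊆ B := by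
    intro i hi
    have : i.natAbs ≤ K := Finset.le_sup (f := fun i => i.natAbs) hi
    simp only [hB_def, Finset.mem_Icc]
    omega
  set C : ℝ := ∑ i ∈ B, |ρ i| ^ r with hC_def
  have hC0 : 0 ≤ C := Finset.sum_nonneg fun i _ => pow_nonneg (abs_nonneg _) r
  -- the prefactor times C tends to 0
  have hCten : Tendsto (fun n : ℕ => (n:ℝ) ^ (-α) * C) atTop (nhds 0) := by
    have h1 : Tendsto (fun n : ℕ => (n:ℝ) ^ (-α)) atTop (nhds 0) :=
      (tendsto_rpow_neg_atTop hα).comp tendsto_natCast_atTop_atTop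
    simpa using h1.mul_const C
  filter_upwards [hCten.eventually_lt_const (show (0:ℝ) < ε/4 by linarith),
    eventually_ge_atTop 1] with n hn1 hn2
  set N : ℝ := (n:ℝ) with hN_def
  have hN0 : (0:ℝ) < N := by
    have : (1:ℝ) ≤ N := by rw [hN_def]; exact_mod_cast hn2
    linarith
  set η : ℝ := t * N ^ (-(1:ℝ)/q) with hη_def
  have hNr : 0 < N ^ (-(1:ℝ)/q) := Real.rpow_pos_of_pos hN0 _
  have hη0 : 0 < η := mul_pos ht0 hNr
  have hη_pow : ∀ m : ℕ, η ^ m = t ^ m * N ^ (-(m:ℝ)/q) := by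
    intro m
    rw [hη_def, mul_pow, ← Real.rpow_natCast (N ^ (-(1:ℝ)/q)) m, ← Real.rpow_mul hN0.le]
    congr 2
    ring
  set I : Finset ℤ := Finset.Ioo (-(n:ℤ)) (n:ℤ) with hI_def
  set A : Finset ℤ := I \ B with hA_def
  -- tail sum small
  have hAs : Disjoint A s := by
    rw [Finset.disjoint_left]
    intro i hi his
    exact (Finset.mem_sdiff.mp hi).2 (hsB his)
  have htail : ∑ i ∈ A, |ρ i| ^ q < ε₀ := by
    have := hs A hAs
    rw [Metric.mem_ball, Real.dist_eq, sub_zero] at this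
    exact lt_of_le_of_lt (le_abs_self _) this
  have htail0 : (0:ℝ) ≤ ∑ i ∈ A, |ρ i| ^ q :=
    Finset.sum_nonneg fun i _ => pow_nonneg (abs_nonneg _) q
  -- cardinality bound
  have hcard : (A.card : ℝ) ≤ 2 * N := by
    have h1 : A.card ≤ I.card := Finset.card_le_card (Finset.sdiff_subset)
    have h2 : I.card ≤ 2 * n := by
      rw [hI_def, Int.card_Ioo]
      omega
    have : (A.card : ℝ) ≤ (2 * n : ℕ) := by exact_mod_cast le_trans h1 h2
    simpa [hN_def] using this
  -- split the sum
  have hsplit : ∑ i ∈ I, |ρ i| ^ r ≤ C + ∑ i ∈ A, |ρ i| ^ r := by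
    have := Finset.sum_inter_add_sum_sdiff I B (fun i => |ρ i| ^ r)
    have hsub : ∑ i ∈ I ∩ B, |ρ i| ^ r ≤ C :=
      Finset.sum_le_sum_of_subset_of_nonneg (Finset.inter_subset_right)
        (fun i _ _ => pow_nonneg (abs_nonneg _) r)
    rw [hA_def]
    linarith
  -- bound on A
  have hAbound : ∑ i ∈ A, |ρ i| ^ r ≤ 2 * N * η ^ r + ε₀ / η ^ (q - r) := by
    have h1 : ∑ i ∈ A, |ρ i| ^ r ≤
        ∑ i ∈ A, (η ^ r + |ρ i| ^ q / η ^ (q - r)) :=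
      Finset.sum_le_sum fun i _ =>
        aux_pointwise q r hrq.le (|ρ i|) η (abs_nonneg _) hη0
    have h2 : ∑ i ∈ A, (η ^ r + |ρ i| ^ q / η ^ (q - r)) =
        (A.card : ℝ) * η ^ r + (∑ i ∈ A, |ρ i| ^ q) / η ^ (q - r) := by
      rw [Finset.sum_add_distrib, Finset.sum_const, Finset.sum_div, nsmul_eq_mul]
    have h3 : (A.card : ℝ) * η ^ r ≤ 2 * N * η ^ r :=
      mul_le_mul_of_nonneg_right hcard (pow_nonneg hη0.le r)
    have h4 : (∑ i ∈ A, |ρ i| ^ q) / η ^ (q - r) ≤ ε₀ / η ^ (q - r) :=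
      div_le_div_of_nonneg_right htail.le (pow_pos hη0 _).le
    linarith
  -- key rpow identities
  have hcast : ((q - r : ℕ) : ℝ) = (q:ℝ) - r := by
    push_cast [Nat.cast_sub hrq.le]; ring
  have e1 : N ^ (-α) * (2 * N * η ^ r) = 2 * t ^ r := by
    rw [hη_pow r]
    have : (2:ℝ) * N * (t ^ r * N ^ (-(r:ℝ)/q)) =
        2 * t ^ r * (N ^ (1:ℝ) * N ^ (-(r:ℝ)/q)) := by
      rw [Real.rpow_one]; ring
    rw [this, ← Real.rpow_add hN0]
    have hzero : -α + (1 + -(r:ℝ)/q) = 0 := by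
      rw [hα_def]; field_simp; ring
    calc N ^ (-α) * (2 * t ^ r * N ^ (1 + -(r:ℝ)/q))
        = 2 * t ^ r * (N ^ (-α) * N ^ (1 + -(r:ℝ)/q)) := by ring
      _ = 2 * t ^ r * N ^ (-α + (1 + -(r:ℝ)/q)) := by rw [← Real.rpow_add hN0]
      _ = 2 * t ^ r := by rw [hzero, Real.rpow_zero, mul_one]
  have e2 : N ^ (-α) * (ε₀ / η ^ (q - r)) = ε / 4 := by
    have htqr : (0:ℝ) < t ^ (q - r) := pow_pos ht0 _
    have hNα : (0:ℝ) < N ^ α := Real.rpow_pos_of_pos hN0 _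
    rw [hη_pow (q - r), hε₀_def, hcast,
      show -((q:ℝ) - ↑r)/↑q = -α by rw [hα_def]; ring,
      Real.rpow_neg hN0.le]
    field_simp
  -- put everything together
  have hNα0 : (0:ℝ) ≤ N ^ (-α) := (Real.rpow_pos_of_pos hN0 _).le
  have hfinal : N ^ (-α) * ∑ i ∈ I, |ρ i| ^ r
      ≤ N ^ (-α) * C + 2 * t ^ r + ε / 4 := by
    calc N ^ (-α) * ∑ i ∈ I, |ρ i| ^ r
        ≤ N ^ (-α) * (C + (2 * N * η ^ r + ε₀ / η ^ (q - r))) :=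
          mul_le_mul_of_nonneg_left (by linarith) hNα0
      _ = N ^ (-α) * C + N ^ (-α) * (2 * N * η ^ r)
            + N ^ (-α) * (ε₀ / η ^ (q - r)) := by ring
      _ = N ^ (-α) * C + 2 * t ^ r + ε / 4 := by rw [e1, e2]
  have htr : t ^ r ≤ t := pow_le_of_le_one ht0.le ht1 (by omega)
  have hsum0 : (0:ℝ) ≤ ∑ i ∈ I, |ρ i| ^ r :=
    Finset.sum_nonneg fun i _ => pow_nonneg (abs_nonneg _) r
  have hnn : (0:ℝ) ≤ N ^ (-α) * ∑ i ∈ I, |ρ i| ^ r := mul_nonneg hNα0 hsum0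
  rw [Real.norm_eq_abs, abs_of_nonneg hnn]
  have : N ^ (-α) * C < ε / 4 := hn1
  linarith
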